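/- Let μ > 0, Q₀ ∈ ℝ and C > 0. Then there exists k₀ > 0 such that for every k ≥ k₀ and all real numbers e, e', e'' satisfying |e − k² − 2Q₀| ≤ C k^{-2}, |e' − 2k| ≤ C k^{-2}, and e'' ≥ 2(1 − 2Q₀ k^{-2}) − C k^{-3}, one has e'' > e'²/(2(e+μ)); in particular the equality e'' = e'²/(2(e+μ)) cannot hold. -/

import Mathlib

lemma stmt_3_keyu (μ Q₀ Q C u : ℝ) (hμ : 0 < μ) (hC : 0 < C)
    (hQ0 : 0 ≤ Q) (hQ1 : Q₀ ≤ Q) (hQ2 : -Q ≤ Q₀) (hQsq : Q ^ 2 = Q₀ ^ 2)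
    (hu0 : 0 < u) (hu1 : u ≤ 1)
    (hKu : (10*C + 16*Q^2 + 8*Q*μ + 12*Q*C + 2*C*μ + C^2 + 1) * u ≤ μ) :
    (2 + C*u^3)^2 < (2 - 4*Q₀*u^2 - C*u^3) * (2*(1 + (2*Q₀+μ)*u^2 - C*u^4)) := by
  have hupow : ∀ n m : ℕ, n ≤ m → u^m ≤ u^n := fun n m h => pow_le_pow_of_le_one hu0.le hu1 h
  have hu4 : u^4 ≤ u^3 := hupow 3 4 (by norm_num)
  have hu5 : u^5 ≤ u^3 := hupow 3 5 (by norm_num)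
  have hu6 : u^6 ≤ u^3 := hupow 3 6 (by norm_num)
  nlinarith [mul_nonneg (mul_nonneg (sub_nonneg.2 hQ1) hμ.le) (pow_pos hu0 4).le,
    mul_nonneg (by positivity : (0:ℝ) ≤ 4*C+16*Q^2+8*Q*μ) (sub_nonneg.2 hu4),
    mul_nonneg (mul_nonneg (sub_nonneg.2 hQ1) hC.le) (pow_pos hu0 5).le,
    mul_nonneg (by positivity : (0:ℝ) ≤ 4*Q*C+2*C*μ) (sub_nonneg.2 hu5),
    mul_nonneg (mul_nonneg (by linarith : (0:ℝ) ≤ Q + Q₀) hC.le) (pow_pos hu0 6).le,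
    mul_nonneg (by positivity : (0:ℝ) ≤ 8*Q*C+C^2) (sub_nonneg.2 hu6),
    mul_nonneg (mul_nonneg hC.le hC.le) (pow_pos hu0 7).le,
    mul_nonneg (sub_nonneg.2 hKu) (sq_nonneg u),
    mul_pos hμ (pow_pos hu0 2), pow_pos hu0 3, hQsq]

/-- High-energy incompatibility in the proof of Lemma 3.1: under the band
asymptotics, the equation E'' = E'²/(2(E+μ)) has no solutions for large k. -/
theorem stmt_3 (μ Q₀ C : ℝ) (hμ : 0 < μ) (hC : 0 < C) :
    ∃ k₀ : ℝ, 0 < k₀ ∧ ∀ k : ℝ, k₀ ≤ k → ∀ e e' e'' : ℝ,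
      |e - k ^ 2 - 2 * Q₀| ≤ C / k ^ 2 →
      |e' - 2 * k| ≤ C / k ^ 2 →
      2 * (1 - 2 * Q₀ / k ^ 2) - C / k ^ 3 ≤ e'' →
      e' ^ 2 / (2 * (e + μ)) < e'' := by
  set Q := |Q₀| with hQdef
  have hQ0 : 0 ≤ Q := abs_nonneg _
  have hQ1 : Q₀ ≤ Q := le_abs_self _
  have hQ2 : -Q ≤ Q₀ := neg_abs_le _
  have hQsq : Q ^ 2 = Q₀ ^ 2 := sq_abs Q₀
  set K := 10*C + 16*Q^2 + 8*Q*μ + 12*Q*C + 2*C*μ + C^2 + 1 with hKdef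
  have hKpos : 0 < K := by positivity
  refine ⟨1 + K/μ + K + 4*Q + C, by positivity, ?_⟩
  intro k hk e e' e'' he he' he''
  have hKμ0 : 0 ≤ K/μ := by positivity
  have hk1 : 1 ≤ k := by linarith
  have hk0 : 0 < k := lt_of_lt_of_le one_pos hk1
  have hkQ : 4*Q + C ≤ k := by linarith
  have hKk : K ≤ μ * k := by
    have h1 : K/μ ≤ k := by linarith
    calc K = μ * (K/μ) := by field_simp
    _ ≤ μ * k := mul_le_mul_of_nonneg_left h1 hμ.le
  set u := 1/k with hudef
  have hu0 : 0 < u := by positivity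
  have hku : k * u = 1 := by rw [hudef]; field_simp
  have hu1 : u ≤ 1 := by rw [hudef]; exact (div_le_one hk0).mpr hk1
  have hKu : K * u ≤ μ := by
    calc K * u ≤ (μ * k) * u := mul_le_mul_of_nonneg_right hKk hu0.le
    _ = μ * (k * u) := by ring
    _ = μ := by rw [hku]; ring
  have hCk2 : C / k ^ 2 = C * u ^ 2 := by rw [hudef]; field_simp
  have hCk3 : C / k ^ 3 = C * u ^ 3 := by rw [hudef]; field_simp
  have hQk2 : 2 * Q₀ / k ^ 2 = 2 * Q₀ * u ^ 2 := by rw [hudef]; field_simp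
  rw [hCk2] at he he'
  rw [hCk3, hQk2] at he''
  clear_value u Q K
  obtain ⟨he1, he2⟩ := abs_le.mp he
  obtain ⟨he1', he2'⟩ := abs_le.mp he'
  clear he he' hudef hQdef hCk2 hCk3 hQk2
  have hE'' : 2 - 4*Q₀*u^2 - C*u^3 ≤ e'' := by linarith
  have hCu2 : C * u^2 ≤ C := by
    calc C * u^2 ≤ C * 1 := by
          apply mul_le_mul_of_nonneg_left _ hC.le
          calc u^2 ≤ u*1 := by
                have := mul_le_mul_of_nonneg_left hu1 hu0.le
                linarith [this]
          _ ≤ 1 := by linarith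
    _ = C := mul_one C
  have hu2 : u^2 ≤ u := by
    have := mul_le_mul_of_nonneg_left hu1 hu0.le
    linarith [this]
  have h4QCu : (4*Q + C) * u ≤ 1 := by
    calc (4*Q + C) * u ≤ k * u := mul_le_mul_of_nonneg_right hkQ hu0.le
    _ = 1 := hku
  have hL : 1 ≤ 2 - 4*Q₀*u^2 - C*u^3 := by
    have h1 : Q₀ * u^2 ≤ Q * u^2 := mul_le_mul_of_nonneg_right hQ1 (sq_nonneg u)
    have h2 : C * u^3 ≤ C * u^2 := by
      have h3 : u^3 ≤ u^2 := by
        calc u^3 = u^2 * u := by ring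
        _ ≤ u^2 * 1 := mul_le_mul_of_nonneg_left hu1 (sq_nonneg u)
        _ = u^2 := mul_one _
      exact mul_le_mul_of_nonneg_left h3 hC.le
    have h4 : (4*Q + C) * u^2 ≤ (4*Q + C) * u :=
      mul_le_mul_of_nonneg_left hu2 (by linarith)
    linarith
  have hksq : k ≤ k^2 := by
    have := mul_le_mul_of_nonneg_left hk1 hk0.le
    linarith [this]
  have hEpos : 0 < 2 * (e + μ) := by linarith
  rw [div_lt_iff₀ hEpos]
  have habs' : |e'| ≤ 2*k + C*u^2 := by
    rw [abs_le]; constructor <;> linarith [mul_nonneg hC.le (sq_nonneg u)]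
  have hsq : e'^2 ≤ (2*k + C*u^2)^2 := by
    have h := abs_le.mp habs'
    have := sq_le_sq' h.1 h.2
    linarith [this]
  have step1 : (2 - 4*Q₀*u^2 - C*u^3) * (2*(e+μ)) ≤ e'' * (2*(e+μ)) :=
    mul_le_mul_of_nonneg_right hE'' hEpos.le
  have step2 : (2 - 4*Q₀*u^2 - C*u^3) * (2*(k^2 + 2*Q₀ + μ - C*u^2))
      ≤ (2 - 4*Q₀*u^2 - C*u^3) * (2*(e+μ)) := by
    have hinner : 2*(k^2 + 2*Q₀ + μ - C*u^2) ≤ 2*(e+μ) := by linarith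
    exact mul_le_mul_of_nonneg_left hinner (by linarith)
  have keyu := stmt_3_keyu μ Q₀ Q C u hμ hC hQ0 hQ1 hQ2 hQsq hu0 hu1 (by rw [hKdef] at hKu; exact hKu)
  have key : (2*k + C*u^2)^2 < (2 - 4*Q₀*u^2 - C*u^3) * (2*(k^2 + 2*Q₀ + μ - C*u^2)) := by
    have e1 : u^2 * ((2*k + C*u^2)^2) = (2 + C*u^3)^2 := by
      linear_combination (4*k*u + 4 + 4*C*u^3) * hku
    have e2 : u^2 * ((2 - 4*Q₀*u^2 - C*u^3) * (2*(k^2 + 2*Q₀ + μ - C*u^2)))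
        = (2 - 4*Q₀*u^2 - C*u^3) * (2*(1 + (2*Q₀+μ)*u^2 - C*u^4)) := by
      linear_combination ((2 - 4*Q₀*u^2 - C*u^3) * 2 * (k*u + 1)) * hku
    have h := keyu
    rw [← e1, ← e2] at h
    exact lt_of_mul_lt_mul_left h (sq_nonneg u)
  calc e'^2 ≤ (2*k + C*u^2)^2 := hsq
  _ < (2 - 4*Q₀*u^2 - C*u^3) * (2*(k^2 + 2*Q₀ + μ - C*u^2)) := key
  _ ≤ (2 - 4*Q₀*u^2 - C*u^3) * (2*(e+μ)) := step2
  _ ≤ e'' * (2*(e+μ)) := step1
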